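/- For all positive reals c₁, c₂, the quantity I₁(c₁,c₂) = 3 + (1 − c₁² − c₂²)²/(c₁c₂)^(4/3) − 4(c₁c₂)^(2/3) is nonnegative, with equality if and only if c₁ = c₂ = 1. -/
import Mathlib

private lemma key_nonneg (r s : ℝ) (hr : 0 < r) (hs : 2 * r ^ 3 ≤ s) :
    0 ≤ (1 - s) ^ 2 + 3 * r ^ 4 - 4 * r ^ 6 := by
  rcases le_or_gt (2 * r ^ 3) 1 with h | h
  · have h6 : 4 * r ^ 6 ≤ 1 := by nlinarith [pow_pos hr 3]
    have h4 : 4 * r ^ 2 < 3 := by nlinarith [pow_pos hr 2, pow_pos hr 4, h6]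
    nlinarith [sq_nonneg (1 - s), mul_nonneg (pow_pos hr 4).le (by linarith : (0:ℝ) ≤ 3 - 4 * r ^ 2)]
  · have hs1 : (1 : ℝ) ≤ s := by nlinarith
    have h1 : 0 ≤ (s - 2 * r ^ 3) * (s + 2 * r ^ 3 - 2) := by nlinarith
    nlinarith [sq_nonneg (r - 1), mul_nonneg (sq_nonneg (r-1)) hr.le,
      mul_nonneg (mul_nonneg (sq_nonneg (r-1)) hr.le) hr.le, sq_nonneg r]

private lemma key_eq (r s : ℝ) (hr : 0 < r) (hs : 2 * r ^ 3 ≤ s)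
    (h : (1 - s) ^ 2 + 3 * r ^ 4 - 4 * r ^ 6 = 0) : r = 1 ∧ s = 2 := by
  rcases le_or_gt (2 * r ^ 3) 1 with hc | hc
  · exfalso
    have h6 : 4 * r ^ 6 ≤ 1 := by nlinarith [pow_pos hr 3]
    have h4 : 4 * r ^ 2 < 3 := by nlinarith [pow_pos hr 2, pow_pos hr 4, h6]
    nlinarith [sq_nonneg (1 - s), mul_pos (pow_pos hr 4) (by linarith : (0:ℝ) < 3 - 4 * r ^ 2)]
  · have hs1 : (1 : ℝ) ≤ s := by nlinarith
    have h1 : 0 ≤ (s - 2 * r ^ 3) * (s + 2 * r ^ 3 - 2) := by nlinarith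
    have hq : (r - 1) ^ 2 * (3 * r ^ 2 + 2 * r + 1) ≤ 0 := by nlinarith
    have hpos : 0 < 3 * r ^ 2 + 2 * r + 1 := by positivity
    have hr1 : r = 1 := by nlinarith [sq_nonneg (r - 1)]
    subst hr1
    constructor
    · rfl
    · -- (1-s)^2 = 1, s ≥ 2
      have : (1 - s) ^ 2 = 1 := by nlinarith
      nlinarith

theorem su2_defect_nonneg (c₁ c₂ : ℝ) (h₁ : 0 < c₁) (h₂ : 0 < c₂) :
    0 ≤ 3 + (1 - c₁ ^ 2 - c₂ ^ 2) ^ 2 / (c₁ * c₂) ^ ((4 : ℝ) / 3)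
        - 4 * (c₁ * c₂) ^ ((2 : ℝ) / 3) ∧
    (3 + (1 - c₁ ^ 2 - c₂ ^ 2) ^ 2 / (c₁ * c₂) ^ ((4 : ℝ) / 3)
        - 4 * (c₁ * c₂) ^ ((2 : ℝ) / 3) = 0 ↔ c₁ = 1 ∧ c₂ = 1) := by
  have hu : 0 < c₁ * c₂ := mul_pos h₁ h₂
  set r : ℝ := (c₁ * c₂) ^ ((1 : ℝ) / 3) with hrdef
  have hr : 0 < r := Real.rpow_pos_of_pos hu _
  have e2 : (c₁ * c₂) ^ ((2 : ℝ) / 3) = r ^ 2 := by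
    rw [hrdef, ← Real.rpow_natCast ((c₁ * c₂) ^ ((1:ℝ)/3)) 2, ← Real.rpow_mul hu.le]
    norm_num
  have e4 : (c₁ * c₂) ^ ((4 : ℝ) / 3) = r ^ 4 := by
    rw [hrdef, ← Real.rpow_natCast ((c₁ * c₂) ^ ((1:ℝ)/3)) 4, ← Real.rpow_mul hu.le]
    norm_num
  have e3 : r ^ 3 = c₁ * c₂ := by
    rw [hrdef, ← Real.rpow_natCast ((c₁ * c₂) ^ ((1:ℝ)/3)) 3, ← Real.rpow_mul hu.le]
    norm_num
  set s : ℝ := c₁ ^ 2 + c₂ ^ 2 with hsdef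
  have hs : 2 * r ^ 3 ≤ s := by rw [e3, hsdef]; nlinarith [sq_nonneg (c₁ - c₂)]
  have hexpr : 3 + (1 - c₁ ^ 2 - c₂ ^ 2) ^ 2 / (c₁ * c₂) ^ ((4 : ℝ) / 3)
        - 4 * (c₁ * c₂) ^ ((2 : ℝ) / 3)
      = ((1 - s) ^ 2 + 3 * r ^ 4 - 4 * r ^ 6) / r ^ 4 := by
    rw [e2, e4, hsdef]
    field_simp
    ring
  rw [hexpr]
  have hr4 : (0 : ℝ) < r ^ 4 := pow_pos hr 4
  constructor
  · exact div_nonneg (key_nonneg r s hr hs) hr4.le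
  · constructor
    · intro h
      have hN : (1 - s) ^ 2 + 3 * r ^ 4 - 4 * r ^ 6 = 0 := by
        field_simp at h
        linarith [h]
      obtain ⟨hr1, hs2⟩ := key_eq r s hr hs hN
      have huv : c₁ * c₂ = 1 := by rw [← e3, hr1]; ring
      have hsum : c₁ ^ 2 + c₂ ^ 2 = 2 := by rw [← hsdef, hs2]
      have hcc : c₁ = c₂ := by nlinarith [sq_nonneg (c₁ - c₂)]
      have : c₁ = 1 := by nlinarith
      exact ⟨this, by rw [← hcc, this]⟩
    · rintro ⟨rfl, rfl⟩
      have : s = 2 := by rw [hsdef]; norm_num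
      rw [this]
      have : r = 1 := by
        have := e3
        nlinarith [sq_nonneg (r - 1), sq_nonneg (r + 1), hr]
      rw [this]; norm_num
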